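/- arXiv:0811.2191 — 3 statements merged into one kernel-verified Lean document; each statement's English description precedes it below -/
import Mathlib

section
/- Let E be the cone of positive finite regular real Borel measures μ on the unit circle satisfying ∫ Re(z) dμ(z) = 0 and ∫ Im(z) dμ(z) = 0. If μ is an extreme direction of E, then the support of μ consists of at most three points. -/
open Complex MeasureTheory
open scoped NNReal
open scoped ENNReal

/-- The unit circle in `ℂ`. -/
noncomputable abbrev UnitCircle := Metric.sphere (0 : ℂ) 1

/-- The cone of positive finite Borel measures on the unit circle with
`∫ Re z dμ = 0` and `∫ Im z dμ = 0`. -/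
def ZeroMomentCone : Set (Measure UnitCircle) :=
  {μ | IsFiniteMeasure μ ∧ (∫ w : UnitCircle, (w : ℂ).re ∂μ) = 0 ∧
    (∫ w : UnitCircle, (w : ℂ).im ∂μ) = 0}

set_option maxHeartbeats 2000000 in
/-- If `μ` is an extreme direction of the cone `E` of positive finite measures on the
circle with vanishing first (real) moments, then `μ` is supported on at most three
points. -/
theorem extreme_direction_supported_on_three_points
    (μ : Measure UnitCircle) (hμ : μ ∈ ZeroMomentCone)
    (hext : ∀ μ₁ ∈ ZeroMomentCone, ∀ μ₂ ∈ ZeroMomentCone, μ = μ₁ + μ₂ →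
      ∃ t s : ℝ≥0, μ₁ = t • μ ∧ μ₂ = s • μ) :
    ∃ S : Finset UnitCircle, S.card ≤ 3 ∧ μ (↑S)ᶜ = 0 := by
  classical
  obtain ⟨hfin, hre, him⟩ := hμ
  haveI := hfin
  by_contra hcon
  push_neg at hcon
  -- the "support" set
  set T : Set UnitCircle := {x | ∀ u ∈ nhds x, μ u ≠ 0} with hT
  have hTc : μ Tᶜ = 0 := by
    apply measure_null_of_locally_null
    intro x hx
    simp only [hT, Set.mem_compl_iff, Set.mem_setOf_eq] at hx
    push_neg at hx
    obtain ⟨u, hu, hu0⟩ := hx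
    exact ⟨u, mem_nhdsWithin_of_mem_nhds hu, hu0⟩
  -- four distinct points in the support
  have h4 : ∃ x : Fin 4 → UnitCircle, Function.Injective x ∧ ∀ i, x i ∈ T := by
    obtain ⟨S, hST, hScard⟩ : ∃ S : Finset UnitCircle, ↑S ⊆ T ∧ S.card = 4 := by
      by_cases hfinT : T.Finite
      · rcases le_or_gt 4 hfinT.toFinset.card with h | h
        · obtain ⟨S, hS, hc⟩ := Finset.exists_subset_card_eq h
          exact ⟨S, by
            intro a ha
            have := hS ha
            simpa using this, hc⟩
        · refine absurd ?_ (hcon hfinT.toFinset (by omega))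
          have : (↑hfinT.toFinset : Set UnitCircle) = T := by simp
          rw [this]; exact hTc
      · obtain ⟨S, h1, h2⟩ := Set.Infinite.exists_subset_card_eq hfinT 4
        exact ⟨S, h1, h2⟩
    have e : Fin 4 ≃ {a // a ∈ S} := (S.equivFin.trans (finCongr hScard)).symm
    exact ⟨fun i => (e i : UnitCircle),
      fun i j hij => e.injective (Subtype.ext hij),
      fun i => hST (e i).2⟩
  obtain ⟨x, hxinj, hxT⟩ := h4
  -- disjoint balls around the four points
  set δ : ℝ := min (min (dist (x 0) (x 1)) (min (dist (x 0) (x 2)) (dist (x 0) (x 3))))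
      (min (dist (x 1) (x 2)) (min (dist (x 1) (x 3)) (dist (x 2) (x 3)))) with hδ
  have hdpos : ∀ i j : Fin 4, i ≠ j → 0 < dist (x i) (x j) :=
    fun i j h => dist_pos.2 fun e => h (hxinj e)
  have hδpos : 0 < δ := by
    rw [hδ]
    simp only [lt_min_iff]
    exact ⟨⟨hdpos 0 1 (by decide), hdpos 0 2 (by decide), hdpos 0 3 (by decide)⟩,
      hdpos 1 2 (by decide), hdpos 1 3 (by decide), hdpos 2 3 (by decide)⟩
  set r : ℝ := δ / 2 with hr
  have hrpos : 0 < r := by rw [hr]; positivity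
  set B : Fin 4 → Set UnitCircle := fun i => Metric.ball (x i) r with hB
  have hBmem : ∀ i, μ (B i) ≠ 0 := fun i => hxT i _ (Metric.ball_mem_nhds _ hrpos)
  have hdisj2 : ∀ i j : Fin 4, δ ≤ dist (x i) (x j) → Disjoint (B i) (B j) := by
    intro i j hij
    rw [Set.disjoint_left]
    intro y hyi hyj
    have h1 : dist (x i) (x j) ≤ dist y (x i) + dist y (x j) := dist_triangle_left _ _ _
    have h2 : dist y (x i) < r := Metric.mem_ball.1 hyi
    have h3 : dist y (x j) < r := Metric.mem_ball.1 hyj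
    rw [hr] at h2 h3
    linarith
  have hB01 : Disjoint (B 0) (B 1) := hdisj2 0 1 (by
    rw [hδ]; exact (min_le_left _ _).trans (min_le_left _ _))
  have hB02 : Disjoint (B 0) (B 2) := hdisj2 0 2 (by
    rw [hδ]; exact (min_le_left _ _).trans ((min_le_right _ _).trans (min_le_left _ _)))
  have hB03 : Disjoint (B 0) (B 3) := hdisj2 0 3 (by
    rw [hδ]; exact (min_le_left _ _).trans ((min_le_right _ _).trans (min_le_right _ _)))
  have hB12 : Disjoint (B 1) (B 2) := hdisj2 1 2 (by
    rw [hδ]; exact (min_le_right _ _).trans (min_le_left _ _))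
  have hB13 : Disjoint (B 1) (B 3) := hdisj2 1 3 (by
    rw [hδ]; exact (min_le_right _ _).trans ((min_le_right _ _).trans (min_le_left _ _)))
  have hB23 : Disjoint (B 2) (B 3) := hdisj2 2 3 (by
    rw [hδ]; exact (min_le_right _ _).trans ((min_le_right _ _).trans (min_le_right _ _)))
  -- the four pieces
  set A0 : Set UnitCircle := B 0 with hA0
  set A1 : Set UnitCircle := B 1 with hA1
  set A2 : Set UnitCircle := B 2 with hA2
  set A3 : Set UnitCircle := (B 0 ∪ B 1 ∪ B 2)ᶜ with hA3
  have hm0 : MeasurableSet A0 := Metric.isOpen_ball.measurableSet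
  have hm1 : MeasurableSet A1 := Metric.isOpen_ball.measurableSet
  have hm2 : MeasurableSet A2 := Metric.isOpen_ball.measurableSet
  have hm3 : MeasurableSet A3 :=
    (((Metric.isOpen_ball.union Metric.isOpen_ball).union Metric.isOpen_ball).measurableSet).compl
  have hA0ne : μ A0 ≠ 0 := hBmem 0
  have hA1ne : μ A1 ≠ 0 := hBmem 1
  have hA2ne : μ A2 ≠ 0 := hBmem 2
  have hA3ne : μ A3 ≠ 0 := by
    have hsub : B 3 ⊆ A3 := by
      intro y hy
      simp only [hA3, Set.mem_compl_iff, Set.mem_union] at *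
      push_neg
      refine ⟨⟨?_, ?_⟩, ?_⟩
      · exact fun h => (Set.disjoint_left.mp hB03 h) hy
      · exact fun h => (Set.disjoint_left.mp hB13 h) hy
      · exact fun h => (Set.disjoint_left.mp hB23 h) hy
    exact fun h => hBmem 3 (measure_mono_null hsub h)
  set ρ0 := μ.restrict A0 with hρ0
  set ρ1 := μ.restrict A1 with hρ1
  set ρ2 := μ.restrict A2 with hρ2
  set ρ3 := μ.restrict A3 with hρ3
  have hsum : ρ0 + ρ1 + ρ2 + ρ3 = μ := by
    have h01 : μ.restrict (B 0 ∪ B 1) = ρ0 + ρ1 :=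
      Measure.restrict_union hB01 hm1
    have h012 : μ.restrict (B 0 ∪ B 1 ∪ B 2) = ρ0 + ρ1 + ρ2 := by
      rw [Measure.restrict_union (Disjoint.union_left hB02 hB12) hm2, h01]
    have := Measure.restrict_add_restrict_compl
      (μ := μ) (s := B 0 ∪ B 1 ∪ B 2) ((Metric.isOpen_ball.union Metric.isOpen_ball).union
        Metric.isOpen_ball).measurableSet
    rw [h012] at this
    exact this
  -- integrability of the coordinate functions
  have hcont_re : Continuous fun w : UnitCircle => (w : ℂ).re :=
    Complex.continuous_re.comp continuous_subtype_val
  have hcont_im : Continuous fun w : UnitCircle => (w : ℂ).im :=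
    Complex.continuous_im.comp continuous_subtype_val
  have hint_re : Integrable (fun w : UnitCircle => (w : ℂ).re) μ := by
    rw [← integrableOn_univ]
    exact hcont_re.continuousOn.integrableOn_compact isCompact_univ
  have hint_im : Integrable (fun w : UnitCircle => (w : ℂ).im) μ := by
    rw [← integrableOn_univ]
    exact hcont_im.continuousOn.integrableOn_compact isCompact_univ
  -- partial moments
  set r0 : ℝ := ∫ w : UnitCircle, (w : ℂ).re ∂ρ0 with hr0
  set r1 : ℝ := ∫ w : UnitCircle, (w : ℂ).re ∂ρ1 with hr1
  set r2 : ℝ := ∫ w : UnitCircle, (w : ℂ).re ∂ρ2 with hr2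
  set r3 : ℝ := ∫ w : UnitCircle, (w : ℂ).re ∂ρ3 with hr3
  set m0 : ℝ := ∫ w : UnitCircle, (w : ℂ).im ∂ρ0 with hm0'
  set m1 : ℝ := ∫ w : UnitCircle, (w : ℂ).im ∂ρ1 with hm1'
  set m2 : ℝ := ∫ w : UnitCircle, (w : ℂ).im ∂ρ2 with hm2'
  set m3 : ℝ := ∫ w : UnitCircle, (w : ℂ).im ∂ρ3 with hm3'
  have hint_re0 : Integrable (fun w : UnitCircle => (w : ℂ).re) ρ0 := hint_re.restrict
  have hint_re1 : Integrable (fun w : UnitCircle => (w : ℂ).re) ρ1 := hint_re.restrict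
  have hint_re2 : Integrable (fun w : UnitCircle => (w : ℂ).re) ρ2 := hint_re.restrict
  have hint_re3 : Integrable (fun w : UnitCircle => (w : ℂ).re) ρ3 := hint_re.restrict
  have hint_im0 : Integrable (fun w : UnitCircle => (w : ℂ).im) ρ0 := hint_im.restrict
  have hint_im1 : Integrable (fun w : UnitCircle => (w : ℂ).im) ρ1 := hint_im.restrict
  have hint_im2 : Integrable (fun w : UnitCircle => (w : ℂ).im) ρ2 := hint_im.restrict
  have hint_im3 : Integrable (fun w : UnitCircle => (w : ℂ).im) ρ3 := hint_im.restrict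
  have hrsum : r0 + r1 + r2 + r3 = 0 := by
    have : (∫ w : UnitCircle, (w : ℂ).re ∂(ρ0 + ρ1 + ρ2 + ρ3)) = 0 := by rw [hsum]; exact hre
    rw [integral_add_measure ((hint_re0.add_measure hint_re1).add_measure hint_re2) hint_re3,
      integral_add_measure (hint_re0.add_measure hint_re1) hint_re2,
      integral_add_measure hint_re0 hint_re1] at this
    exact this
  have hmsum : m0 + m1 + m2 + m3 = 0 := by
    have : (∫ w : UnitCircle, (w : ℂ).im ∂(ρ0 + ρ1 + ρ2 + ρ3)) = 0 := by rw [hsum]; exact him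
    rw [integral_add_measure ((hint_im0.add_measure hint_im1).add_measure hint_im2) hint_im3,
      integral_add_measure (hint_im0.add_measure hint_im1) hint_im2,
      integral_add_measure hint_im0 hint_im1] at this
    exact this
  -- a nontrivial linear relation among the first three moment vectors
  have hdep : ¬ LinearIndependent ℝ ![((r0 : ℝ), m0), (r1, m1), (r2, m2)] := by
    intro h
    have hcard := h.fintype_card_le_finrank
    simp [Module.finrank_self] at hcard
  obtain ⟨g, hg0, k, hgk⟩ := Fintype.not_linearIndependent_iff.mp hdep
  rw [Fin.sum_univ_three] at hg0
  simp only [Matrix.cons_val_zero, Matrix.cons_val_one, Matrix.head_cons,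
    Matrix.cons_val_two, Matrix.tail_cons, Prod.smul_mk, smul_eq_mul,
    Prod.mk_add_mk, Prod.mk_eq_zero] at hg0
  obtain ⟨hgr, hgm⟩ := hg0
  -- the perturbation coefficients
  obtain ⟨c0, c1, c2, c3, hc0n, hc0l, hc1n, hc1l, hc2n, hc2l, hc3n, hc3l, hcr, hcm, hcontra⟩ :
      ∃ c0 c1 c2 c3 : ℝ,
        0 ≤ c0 ∧ c0 ≤ 1 ∧ 0 ≤ c1 ∧ c1 ≤ 1 ∧ 0 ≤ c2 ∧ c2 ≤ 1 ∧ 0 ≤ c3 ∧ c3 ≤ 1 ∧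
        c0 * r0 + c1 * r1 + c2 * r2 + c3 * r3 = 0 ∧
        c0 * m0 + c1 * m1 + c2 * m2 + c3 * m3 = 0 ∧
        ¬(c0 = c3 ∧ c1 = c3 ∧ c2 = c3) := by
    obtain ⟨M, hMg0, hMg1, hMg2, hMpos⟩ :
        ∃ M : ℝ, |g 0| ≤ M ∧ |g 1| ≤ M ∧ |g 2| ≤ M ∧ 0 < M := by
      refine ⟨|g 0| + |g 1| + |g 2| + 1, ?_, ?_, ?_, ?_⟩ <;>
        nlinarith [abs_nonneg (g 0), abs_nonneg (g 1), abs_nonneg (g 2)]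
    have hεpos : 0 < 1 / (2 * M) := by positivity
    have hbound : ∀ y : ℝ, |y| ≤ M → |1 / (2 * M) * y| ≤ 1 / 2 := by
      intro y hy
      rw [abs_mul, abs_of_pos hεpos]
      calc 1 / (2 * M) * |y| ≤ 1 / (2 * M) * M :=
            mul_le_mul_of_nonneg_left hy (le_of_lt hεpos)
        _ = 1 / 2 := by field_simp
    have hb0 := abs_le.mp (hbound (g 0) hMg0)
    have hb1 := abs_le.mp (hbound (g 1) hMg1)
    have hb2 := abs_le.mp (hbound (g 2) hMg2)
    refine ⟨1 / 2 + 1 / (2 * M) * g 0, 1 / 2 + 1 / (2 * M) * g 1, 1 / 2 + 1 / (2 * M) * g 2,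
      1 / 2, by linarith [hb0.1], by linarith [hb0.2], by linarith [hb1.1], by linarith [hb1.2],
      by linarith [hb2.1], by linarith [hb2.2], by norm_num, by norm_num, ?_, ?_, ?_⟩
    · linear_combination hrsum / 2 + (1 / (2 * M)) * hgr
    · linear_combination hmsum / 2 + (1 / (2 * M)) * hgm
    · rintro ⟨e0, e1, e2⟩
      have hz0 : 1 / (2 * M) * g 0 = 0 := by linarith
      have hz1 : 1 / (2 * M) * g 1 = 0 := by linarith
      have hz2 : 1 / (2 * M) * g 2 = 0 := by linarith
      have hg0' : g 0 = 0 := by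
        rcases mul_eq_zero.mp hz0 with h | h
        · exact absurd h (ne_of_gt hεpos)
        · exact h
      have hg1' : g 1 = 0 := by
        rcases mul_eq_zero.mp hz1 with h | h
        · exact absurd h (ne_of_gt hεpos)
        · exact h
      have hg2' : g 2 = 0 := by
        rcases mul_eq_zero.mp hz2 with h | h
        · exact absurd h (ne_of_gt hεpos)
        · exact h
      apply hgk
      match k with
      | 0 => exact hg0'
      | 1 => exact hg1'
      | 2 => exact hg2'
  -- membership of combinations in the cone
  have key : ∀ a0 a1 a2 a3 : ℝ, 0 ≤ a0 → 0 ≤ a1 → 0 ≤ a2 → 0 ≤ a3 →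
      a0 * r0 + a1 * r1 + a2 * r2 + a3 * r3 = 0 →
      a0 * m0 + a1 * m1 + a2 * m2 + a3 * m3 = 0 →
      (a0.toNNReal • ρ0 + a1.toNNReal • ρ1 + a2.toNNReal • ρ2 + a3.toNNReal • ρ3)
        ∈ ZeroMomentCone := by
    intro a0 a1 a2 a3 h0 h1 h2 h3 hra hma
    refine ⟨inferInstance, ?_, ?_⟩
    · rw [integral_add_measure (((hint_re0.smul_measure_nnreal).add_measure
          (hint_re1.smul_measure_nnreal)).add_measure (hint_re2.smul_measure_nnreal))
          (hint_re3.smul_measure_nnreal),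
        integral_add_measure ((hint_re0.smul_measure_nnreal).add_measure
          (hint_re1.smul_measure_nnreal)) (hint_re2.smul_measure_nnreal),
        integral_add_measure (hint_re0.smul_measure_nnreal) (hint_re1.smul_measure_nnreal),
        integral_smul_nnreal_measure, integral_smul_nnreal_measure,
        integral_smul_nnreal_measure, integral_smul_nnreal_measure]
      simp only [NNReal.smul_def, Real.coe_toNNReal _ h0, Real.coe_toNNReal _ h1,
        Real.coe_toNNReal _ h2, Real.coe_toNNReal _ h3, smul_eq_mul]
      rw [← hr0, ← hr1, ← hr2, ← hr3]
      linarith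
    · rw [integral_add_measure (((hint_im0.smul_measure_nnreal).add_measure
          (hint_im1.smul_measure_nnreal)).add_measure (hint_im2.smul_measure_nnreal))
          (hint_im3.smul_measure_nnreal),
        integral_add_measure ((hint_im0.smul_measure_nnreal).add_measure
          (hint_im1.smul_measure_nnreal)) (hint_im2.smul_measure_nnreal),
        integral_add_measure (hint_im0.smul_measure_nnreal) (hint_im1.smul_measure_nnreal),
        integral_smul_nnreal_measure, integral_smul_nnreal_measure,
        integral_smul_nnreal_measure, integral_smul_nnreal_measure]
      simp only [NNReal.smul_def, Real.coe_toNNReal _ h0, Real.coe_toNNReal _ h1,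
        Real.coe_toNNReal _ h2, Real.coe_toNNReal _ h3, smul_eq_mul]
      rw [← hm0', ← hm1', ← hm2', ← hm3']
      linarith
  set μ₁ : Measure UnitCircle :=
    c0.toNNReal • ρ0 + c1.toNNReal • ρ1 + c2.toNNReal • ρ2 + c3.toNNReal • ρ3 with hμ₁
  set μ₂ : Measure UnitCircle :=
    (1 - c0).toNNReal • ρ0 + (1 - c1).toNNReal • ρ1 + (1 - c2).toNNReal • ρ2
      + (1 - c3).toNNReal • ρ3 with hμ₂
  have hmem1 : μ₁ ∈ ZeroMomentCone := key c0 c1 c2 c3 hc0n hc1n hc2n hc3n hcr hcm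
  have hmem2 : μ₂ ∈ ZeroMomentCone := by
    refine key (1 - c0) (1 - c1) (1 - c2) (1 - c3) (by linarith) (by linarith) (by linarith)
      (by linarith) (by linear_combination hrsum - hcr) (by linear_combination hmsum - hcm)
  have hdecomp : μ = μ₁ + μ₂ := by
    have hpair : ∀ (a : ℝ), 0 ≤ a → a ≤ 1 → ∀ ρ : Measure UnitCircle,
        a.toNNReal • ρ + (1 - a).toNNReal • ρ = ρ := by
      intro a ha hal ρ
      rw [← add_smul]
      have : a.toNNReal + (1 - a).toNNReal = 1 := by
        rw [← Real.toNNReal_add ha (by linarith)]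
        norm_num
      rw [this, one_smul]
    rw [hμ₁, hμ₂, ← hsum]
    have e0 := hpair c0 hc0n hc0l ρ0
    have e1 := hpair c1 hc1n hc1l ρ1
    have e2 := hpair c2 hc2n hc2l ρ2
    have e3 := hpair c3 hc3n hc3l ρ3
    calc ρ0 + ρ1 + ρ2 + ρ3
        = (c0.toNNReal • ρ0 + (1 - c0).toNNReal • ρ0)
          + (c1.toNNReal • ρ1 + (1 - c1).toNNReal • ρ1)
          + (c2.toNNReal • ρ2 + (1 - c2).toNNReal • ρ2)
          + (c3.toNNReal • ρ3 + (1 - c3).toNNReal • ρ3) := by rw [e0, e1, e2, e3]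
      _ = _ := by abel
  obtain ⟨t, s, ht, _⟩ := hext μ₁ hmem1 μ₂ hmem2 hdecomp
  -- evaluate μ₁ on each piece
  have hz : ∀ {As At : Set UnitCircle}, MeasurableSet As → Disjoint As At →
      (μ.restrict At) As = 0 := by
    intro As At h1 h2
    rw [Measure.restrict_apply h1, Set.disjoint_iff_inter_eq_empty.mp h2, measure_empty]
  have hd01 : Disjoint A0 A1 := hB01
  have hd02 : Disjoint A0 A2 := hB02
  have hd12 : Disjoint A1 A2 := hB12
  have hd03 : Disjoint A0 A3 :=
    (disjoint_compl_right).mono_left ((Set.subset_union_left).trans Set.subset_union_left)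
  have hd13 : Disjoint A1 A3 :=
    (disjoint_compl_right).mono_left ((Set.subset_union_right).trans Set.subset_union_left)
  have hd23 : Disjoint A2 A3 := (disjoint_compl_right).mono_left Set.subset_union_right
  have hself : ∀ {As : Set UnitCircle}, MeasurableSet As → (μ.restrict As) As = μ As := by
    intro As h1
    rw [Measure.restrict_apply h1, Set.inter_self]
  have happ0 : μ₁ A0 = c0.toNNReal • μ A0 := by
    rw [hμ₁]
    simp only [Measure.add_apply, Measure.smul_apply, hρ0, hρ1, hρ2, hρ3,
      hself hm0, hz hm0 hd01, hz hm0 hd02, hz hm0 hd03, smul_zero, add_zero]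
  have happ1 : μ₁ A1 = c1.toNNReal • μ A1 := by
    rw [hμ₁]
    simp only [Measure.add_apply, Measure.smul_apply, hρ0, hρ1, hρ2, hρ3,
      hself hm1, hz hm1 hd01.symm, hz hm1 hd12, hz hm1 hd13, smul_zero, add_zero, zero_add]
  have happ2 : μ₁ A2 = c2.toNNReal • μ A2 := by
    rw [hμ₁]
    simp only [Measure.add_apply, Measure.smul_apply, hρ0, hρ1, hρ2, hρ3,
      hself hm2, hz hm2 hd02.symm, hz hm2 hd12.symm, hz hm2 hd23, smul_zero, add_zero, zero_add]
  have happ3 : μ₁ A3 = c3.toNNReal • μ A3 := by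
    rw [hμ₁]
    simp only [Measure.add_apply, Measure.smul_apply, hρ0, hρ1, hρ2, hρ3,
      hself hm3, hz hm3 hd03.symm, hz hm3 hd13.symm, hz hm3 hd23.symm, smul_zero, add_zero,
      zero_add]
  have hcancel : ∀ (a : ℝ≥0) (v : ℝ≥0∞), v ≠ 0 → v ≠ ⊤ → a • v = t • v → a = t := by
    intro a v h0 htop h
    rw [ENNReal.smul_def, ENNReal.smul_def, smul_eq_mul, smul_eq_mul] at h
    have := (ENNReal.mul_left_inj h0 htop).mp h
    exact_mod_cast this
  have hteq0 : c0.toNNReal = t := hcancel _ _ hA0ne (measure_ne_top μ _)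
    (by rw [← happ0, ht, Measure.smul_apply])
  have hteq1 : c1.toNNReal = t := hcancel _ _ hA1ne (measure_ne_top μ _)
    (by rw [← happ1, ht, Measure.smul_apply])
  have hteq2 : c2.toNNReal = t := hcancel _ _ hA2ne (measure_ne_top μ _)
    (by rw [← happ2, ht, Measure.smul_apply])
  have hteq3 : c3.toNNReal = t := hcancel _ _ hA3ne (measure_ne_top μ _)
    (by rw [← happ3, ht, Measure.smul_apply])
  have hcc : ∀ (a : ℝ), 0 ≤ a → a.toNNReal = t → a = c3 := by
    intro a ha hat
    have : a.toNNReal = c3.toNNReal := by rw [hat, hteq3]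
    exact (Real.toNNReal_eq_toNNReal_iff ha hc3n).mp this
  exact hcontra ⟨hcc c0 hc0n hteq0, hcc c1 hc1n hteq1, hcc c2 hc2n hteq2⟩
end

section
/- Every zero-mean finite positive measure on the unit circle supported on at most three points is an extreme direction of the cone E of zero-mean positive measures: if μ = μ₁ + μ₂ with μ₁, μ₂ ∈ E, then μ₁ and μ₂ are nonnegative scalar multiples of μ. -/
open Complex MeasureTheory
open scoped NNReal

/-- The cone of positive finite Borel measures on the unit circle with zero complex
first moment. -/
def ZeroMeanCone : Set (Measure UnitCircle) :=
  {μ | IsFiniteMeasure μ ∧ (∫ w : UnitCircle, (w : ℂ) ∂μ) = 0}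

lemma aux_span_top (s : Set ℂ) (h : (0 : ℂ) ∈ interior (convexHull ℝ s)) :
    Submodule.span ℝ s = ⊤ := by
  apply Submodule.eq_top_of_nonempty_interior' (R := ℝ)
  refine ⟨0, interior_mono ?_ h⟩
  exact convexHull_min Submodule.subset_span (Submodule.span ℝ s).convex

lemma aux_propto {ι : Type*} [Fintype ι] (v : ι → ℂ)
    (hcard : Fintype.card ι ≤ 3) (hv : ∀ i, v i ≠ 0)
    (hspan : Fintype.card ι = 3 → Submodule.span ℝ (Set.range v) = ⊤)
    (a b : ι → ℝ) (ha : ∑ i, a i • v i = 0) (hb : ∑ i, b i • v i = 0)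
    (ha0 : a ≠ 0) : ∃ t : ℝ, b = t • a := by
  set L : (ι → ℝ) →ₗ[ℝ] ℂ := Fintype.linearCombination ℝ v with hL
  have haK : a ∈ LinearMap.ker L := by
    simpa [hL, Fintype.linearCombination_apply] using ha
  have hbK : b ∈ LinearMap.ker L := by
    simpa [hL, Fintype.linearCombination_apply] using hb
  have hdim : Module.finrank ℝ (ι → ℝ) = Fintype.card ι :=
    Module.finrank_fintype_fun_eq_card ℝ
  have hrn : Module.finrank ℝ (LinearMap.range L) +
      Module.finrank ℝ (LinearMap.ker L) = Fintype.card ι := by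
    rw [← hdim]; exact LinearMap.finrank_range_add_finrank_ker L
  have hker1 : Module.finrank ℝ (LinearMap.ker L) ≤ 1 := by
    rcases Nat.eq_zero_or_pos (Fintype.card ι) with h0 | hpos
    · have := Submodule.finrank_le (LinearMap.ker L)
      omega
    · have : Nonempty ι := Fintype.card_pos_iff.mp hpos
      obtain ⟨i⟩ := this
      have hmem : v i ∈ LinearMap.range L := by
        classical
        exact ⟨Pi.single i 1, by simp [hL]⟩
      have hr1 : 1 ≤ Module.finrank ℝ (LinearMap.range L) := by
        have hle : Submodule.span ℝ {v i} ≤ LinearMap.range L := by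
          rw [Submodule.span_singleton_le_iff_mem]; exact hmem
        have := Submodule.finrank_mono hle
        rwa [finrank_span_singleton (hv i)] at this
      rcases eq_or_ne (Fintype.card ι) 3 with h3 | h3
      · have hr2 : Module.finrank ℝ (LinearMap.range L) = 2 := by
          have : LinearMap.range L = ⊤ := by
            rw [hL, Fintype.range_linearCombination]; exact hspan h3
          rw [this, finrank_top, Complex.finrank_real_complex]
        omega
      · omega
  have hspan_a : LinearMap.ker L = Submodule.span ℝ {a} := by
    symm
    apply Submodule.eq_of_le_of_finrank_le
    · rw [Submodule.span_singleton_le_iff_mem]; exact haK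
    · rwa [finrank_span_singleton ha0]
  have : b ∈ Submodule.span ℝ ({a} : Set (ι → ℝ)) := hspan_a ▸ hbK
  obtain ⟨t, ht⟩ := Submodule.mem_span_singleton.mp this
  exact ⟨t, ht.symm⟩

lemma aux_meas_finset {α : Type*} [MeasurableSpace α] [MeasurableSingletonClass α]
    (ν : Measure α) (t : Finset α) : ν ↑t = ∑ w ∈ t, ν {w} := by
  have h1 : (↑t : Set α) = ⋃ w ∈ t, {w} := by ext x; simp
  rw [h1, measure_biUnion_finset ?_ (fun b _ => measurableSet_singleton b)]
  intro x _ y _ hxy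
  simp [Set.disjoint_singleton, hxy]

lemma aux_ext {α : Type*} [MeasurableSpace α] [MeasurableSingletonClass α]
    (ν ν' : Measure α) (S : Finset α) (h : ν (↑S)ᶜ = 0) (h' : ν' (↑S)ᶜ = 0)
    (hs : ∀ w ∈ S, ν {w} = ν' {w}) : ν = ν' := by
  classical
  ext A hA
  have key : ∀ m : Measure α, m (↑S)ᶜ = 0 →
      m A = ∑ w ∈ S.filter (· ∈ A), m {w} := by
    intro m hm
    have h2 : m (A \ ↑S) = 0 := measure_mono_null (fun x hx => hx.2) hm
    have h3 : m (A ∩ ↑S) + m (A \ ↑S) = m A := measure_inter_add_diff A S.measurableSet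
    have h4 : (A ∩ ↑S : Set α) = ↑(S.filter (· ∈ A)) := by
      ext x; simp [and_comm]
    rw [← h3, h2, add_zero, h4, aux_meas_finset]
  rw [key ν h, key ν' h']
  exact Finset.sum_congr rfl fun w hw => hs w (Finset.mem_filter.mp hw).1

lemma aux_integral (ν : Measure UnitCircle) [IsFiniteMeasure ν] (S : Finset UnitCircle)
    (h : ν (↑S)ᶜ = 0) :
    ∫ w : UnitCircle, (w : ℂ) ∂ν = ∑ w ∈ S, (ν {w}).toReal • (w : ℂ) := by
  have hc : Continuous (fun w : UnitCircle => (w : ℂ)) := continuous_subtype_val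
  have hi : Integrable (fun w : UnitCircle => (w : ℂ)) ν := by
    refine (integrable_const (1 : ℝ)).mono' hc.aestronglyMeasurable ?_
    filter_upwards with w
    simp [mem_sphere_zero_iff_norm.mp w.2]
  have hres : ν.restrict ↑S = ν := by
    apply Measure.restrict_eq_self_of_ae_mem
    rw [Filter.Eventually, mem_ae_iff]
    simpa using h
  have key := MeasureTheory.integral_finset S hi.integrableOn
  rw [hres] at key; exact key

lemma aux_multiple (μ : Measure UnitCircle) (hμ0 : μ ≠ 0) (hμfin : IsFiniteMeasure μ)
    (hμint : ∫ w : UnitCircle, (w : ℂ) ∂μ = 0)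
    (S : Finset UnitCircle) (hcard : S.card ≤ 3) (hsupp : μ (↑S)ᶜ = 0)
    (hint : S.card = 3 →
      (0 : ℂ) ∈ interior (convexHull ℝ ((fun w : UnitCircle => (w : ℂ)) '' ↑S)))
    (ν : Measure UnitCircle) (hνfin : IsFiniteMeasure ν)
    (hνint : ∫ w : UnitCircle, (w : ℂ) ∂ν = 0) (hle : ν ≤ μ) :
    ∃ t : ℝ≥0, ν = t • μ := by
  haveI := hμfin; haveI := hνfin
  have hνsupp : ν (↑S)ᶜ = 0 := le_antisymm (hsupp ▸ hle _) (zero_le)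
  set v : {x // x ∈ S} → ℂ := fun i => ((i : UnitCircle) : ℂ) with hv
  have hrange : Set.range v = (fun w : UnitCircle => (w : ℂ)) '' ↑S := by
    ext z
    constructor
    · rintro ⟨i, rfl⟩; exact ⟨i, i.2, rfl⟩
    · rintro ⟨w, hw, rfl⟩; exact ⟨⟨w, hw⟩, rfl⟩
  have hcards : Fintype.card {x // x ∈ S} = S.card := Fintype.card_coe S
  set a : {x // x ∈ S} → ℝ := fun i => (μ {(i : UnitCircle)}).toReal with haa
  set b : {x // x ∈ S} → ℝ := fun i => (ν {(i : UnitCircle)}).toReal with hbb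
  have hsum : ∀ (m : Measure UnitCircle), IsFiniteMeasure m → m (↑S)ᶜ = 0 →
      (∫ w : UnitCircle, (w : ℂ) ∂m) = 0 →
      ∑ i : {x // x ∈ S}, (m {(i : UnitCircle)}).toReal • v i = 0 := by
    intro m hmf hm hmi
    haveI := hmf
    have := Finset.sum_coe_sort S (fun w => (m {w}).toReal • (w : ℂ))
    rw [this, ← aux_integral m S hm]
    exact hmi
  have ha : ∑ i, a i • v i = 0 := hsum μ hμfin hsupp hμint
  have hb : ∑ i, b i • v i = 0 := hsum ν hνfin hνsupp hνint
  have ha0 : a ≠ 0 := by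
    intro h
    apply hμ0
    refine aux_ext μ 0 S hsupp (by simp) fun w hw => ?_
    have h1 := congrFun h ⟨w, hw⟩
    simp only [haa, Pi.zero_apply] at h1
    have hne := measure_ne_top μ ({w} : Set UnitCircle)
    have : μ {w} = 0 := by
      rcases ENNReal.toReal_eq_zero_iff _ |>.mp h1 with h2 | h2
      · exact h2
      · exact absurd h2 hne
    simp [this]
  have hvne : ∀ i, v i ≠ 0 := by
    intro i h
    have h1 : ‖v i‖ = 1 := mem_sphere_zero_iff_norm.mp (i : UnitCircle).2
    rw [h] at h1; simp at h1
  have hspan : Fintype.card {x // x ∈ S} = 3 →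
      Submodule.span ℝ (Set.range v) = ⊤ := by
    intro h3
    rw [hrange]
    exact aux_span_top _ (hint (hcards ▸ h3))
  obtain ⟨t, ht⟩ := aux_propto v (hcards ▸ hcard) hvne hspan a b ha hb ha0
  obtain ⟨i, hi⟩ := Function.ne_iff.mp ha0
  have hia : 0 < a i := lt_of_le_of_ne ENNReal.toReal_nonneg (Ne.symm hi)
  have hbi : b i = t * a i := by rw [ht]; rfl
  have hbnn : 0 ≤ b i := ENNReal.toReal_nonneg
  have ht0 : 0 ≤ t := by nlinarith
  refine ⟨t.toNNReal, aux_ext ν (t.toNNReal • μ) S hνsupp ?_ ?_⟩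
  · simp [Measure.smul_apply, hsupp]
  · intro w hw
    have h1 : ν {w} = ENNReal.ofReal (b ⟨w, hw⟩) :=
      (ENNReal.ofReal_toReal (measure_ne_top ν _)).symm
    have h2 : b ⟨w, hw⟩ = t * a ⟨w, hw⟩ := by rw [ht]; rfl
    rw [h1, h2]
    have h3 : a ⟨w, hw⟩ = (μ {w}).toReal := rfl
    rw [h3, ENNReal.ofReal_mul ht0, ENNReal.ofReal_toReal (measure_ne_top μ _),
      Measure.smul_apply, ENNReal.smul_def]
    rfl

/-- Every nonzero zero-mean finite positive measure on the unit circle supported on at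
most three points (with `0` interior to the convex hull of the support when it has
three points) is an extreme direction of the cone of zero-mean positive measures:
any decomposition `μ = μ₁ + μ₂` within the cone has `μ₁, μ₂` nonnegative multiples
of `μ`. -/
theorem three_point_zero_mean_measure_is_extreme_direction
    (μ : Measure UnitCircle) (hμ0 : μ ≠ 0) (hμ : μ ∈ ZeroMeanCone)
    (S : Finset UnitCircle) (hcard : S.card ≤ 3) (hsupp : μ (↑S)ᶜ = 0)
    (hint : S.card = 3 →
      (0 : ℂ) ∈ interior (convexHull ℝ ((fun w : UnitCircle => (w : ℂ)) '' ↑S))) :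
    ∀ μ₁ ∈ ZeroMeanCone, ∀ μ₂ ∈ ZeroMeanCone, μ = μ₁ + μ₂ →
      ∃ t s : ℝ≥0, μ₁ = t • μ ∧ μ₂ = s • μ := by
  intro μ₁ hμ₁ μ₂ hμ₂ hadd
  obtain ⟨hμf, hμi⟩ := hμ
  obtain ⟨h1f, h1i⟩ := hμ₁
  obtain ⟨h2f, h2i⟩ := hμ₂
  have h1le : μ₁ ≤ μ := by
    rw [hadd]; exact Measure.le_add_right le_rfl
  have h2le : μ₂ ≤ μ := by
    rw [hadd]; exact Measure.le_add_left le_rfl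
  obtain ⟨t, ht⟩ := aux_multiple μ hμ0 hμf hμi S hcard hsupp hint μ₁ h1f h1i h1le
  obtain ⟨s, hs⟩ := aux_multiple μ hμ0 hμf hμi S hcard hsupp hint μ₂ h2f h2i h2le
  exact ⟨t, s, ht, hs⟩
end

section
/- Let μ be a zero-mean Borel probability measure on the unit circle supported on n ∈ {2,3} points, let h_μ(z) = ∫_𝕋 (w+z)/(w-z) dμ(w) and ψ_μ = (h_μ - 1)/(h_μ + 1). Then ψ_μ is a rational inner function (a Blaschke product) of degree n with ψ_μ(0) = 0 and ψ_μ'(0) = 0, and for w on the unit circle, ψ_μ(w) = 1 exactly when w lies in the support of μ. -/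
set_option maxHeartbeats 1000000


open Complex MeasureTheory
open scoped ComplexConjugate

lemma myIntegral_eq_sum (μ : Measure UnitCircle) [IsProbabilityMeasure μ]
    (S : Finset UnitCircle) (hsupp : μ (↑S)ᶜ = 0) (f : UnitCircle → ℂ) (hf : Continuous f) :
    ∫ w, f w ∂μ = ∑ w ∈ S, (μ {w}).toReal • f w := by
  have hint : Integrable f μ :=
    hf.integrable_of_hasCompactSupport
      (IsCompact.of_isClosed_subset isCompact_univ (isClosed_tsupport f) (Set.subset_univ _))
  have hres : μ.restrict ↑S = μ := by
    apply Measure.restrict_eq_self_of_ae_mem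
    rw [MeasureTheory.ae_iff]
    exact hsupp
  calc ∫ w, f w ∂μ = ∫ w in ↑S, f w ∂μ := by rw [hres]
    _ = ∑ w ∈ S, (μ {w}).toReal • f w := integral_finset S (by rw [IntegrableOn, hres]; exact hint)

lemma habs (w : UnitCircle) : ‖(w : ℂ)‖ = 1 := by
  simpa using mem_sphere_iff_norm.mp w.2

lemma huc (w : UnitCircle) : (w : ℂ) * conj (w : ℂ) = 1 := by
  rw [Complex.mul_conj, Complex.normSq_eq_norm_sq, habs w]; norm_num

lemma hsub_ne (w : UnitCircle) {z : ℂ} (hz : ‖z‖ < 1) : (w : ℂ) - z ≠ 0 := by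
  intro hc
  rw [sub_eq_zero] at hc
  rw [← hc, habs w] at hz
  exact lt_irrefl 1 hz

lemma hcoef (μ : Measure UnitCircle) [IsProbabilityMeasure μ]
    (S : Finset UnitCircle) (hsupp : μ (↑S)ᶜ = 0) :
    ∑ w ∈ S, ((μ {w}).toReal : ℂ) = 1 := by
  have := myIntegral_eq_sum μ S hsupp (fun _ => (1:ℂ)) continuous_const
  simp only [integral_const, measure_univ, ENNReal.toReal_one, one_smul] at this
  calc ∑ w ∈ S, ((μ {w}).toReal : ℂ) = ∑ x ∈ S, (μ {x}).toReal • (1:ℂ) := by simp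
    _ = 1 := by rw [← this]; simp

lemma hmean_sum (μ : Measure UnitCircle) [IsProbabilityMeasure μ]
    (hmean : (∫ w : UnitCircle, (w : ℂ) ∂μ) = 0)
    (S : Finset UnitCircle) (hsupp : μ (↑S)ᶜ = 0) :
    ∑ w ∈ S, ((μ {w}).toReal : ℂ) * w = 0 := by
  rw [← hmean, myIntegral_eq_sum μ S hsupp _ continuous_subtype_val]
  simp [smul_eq_mul]

lemma hherg (μ : Measure UnitCircle) [IsProbabilityMeasure μ]
    (S : Finset UnitCircle) (hsupp : μ (↑S)ᶜ = 0) {z : ℂ} (hz : ‖z‖ < 1) :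
    (∫ w : UnitCircle, ((w : ℂ) + z) / ((w : ℂ) - z) ∂μ)
      = ∑ w ∈ S, ((μ {w}).toReal : ℂ) * (((w:ℂ) + z) / ((w:ℂ) - z)) := by
  rw [myIntegral_eq_sum μ S hsupp _ (by
    exact (continuous_subtype_val.add continuous_const).div
      (continuous_subtype_val.sub continuous_const) (fun w => hsub_ne w hz))]
  simp [smul_eq_mul]

lemma mkrel (x y w : ℂ) (px py pw : ℝ) (nx : Complex.normSq x = 1)
    (ny : Complex.normSq y = 1) (nw : Complex.normSq w = 1)
    (he : (px:ℂ) * x + (py:ℂ) * y + (pw:ℂ) * w = 0) :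
    px^2 + py^2 + 2*(px*py*((x*conj y).re)) = pw^2 := by
  have h0 : (px:ℂ) * x + (py:ℂ) * y = -((pw:ℂ) * w) := by linear_combination he
  have h1 := congrArg Complex.normSq h0
  rw [Complex.normSq_add, Complex.normSq_neg, Complex.normSq_mul, Complex.normSq_mul,
    Complex.normSq_mul, Complex.normSq_ofReal, Complex.normSq_ofReal,
    Complex.normSq_ofReal, nx, ny, nw, map_mul, Complex.conj_ofReal,
    show (px:ℂ) * x * ((py:ℂ) * conj y) = ((px*py : ℝ):ℂ) * (x * conj y) by
      push_cast; ring, Complex.re_ofReal_mul] at h1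
  nlinarith [h1]

lemma mass_lt_half (p q r R : ℝ) (hp : 0<p) (hq : 0<q) (hr : 0<r) (hsum : p+q+r = 1)
    (hrel : q^2 + r^2 + 2*(q*r*R) = p^2) (hR : R < 1) : p < 1/2 := by
  nlinarith [mul_pos hq hr]

lemma aux_lt (p q r X : ℝ) (hp : 0<p) (hq : 0<q) (hr : 0<r)
    (hkey : p*q*r*(1 - X) = (1-2*p)*((1-2*q)*(1-2*r)))
    (hprod : 0 < (1-2*p)*((1-2*q)*(1-2*r))) : X < 1 := by
  nlinarith [mul_pos (mul_pos hp hq) hr]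

lemma mul_ne_one_of_lt (x y : ℝ) (hx : 0 ≤ x) (hx1 : x < 1) (hy1 : y < 1) : x*y ≠ 1 := by
  nlinarith

lemma abs_lt_one_of_normSq_lt {z : ℂ} (hz : Complex.normSq z < 1) : ‖z‖ < 1 := by
  nlinarith [Complex.sq_norm z, norm_nonneg z]

lemma relt (x y : ℂ) (nx : Complex.normSq x = 1) (ny : Complex.normSq y = 1) (hxy : x ≠ y) :
    (x*conj y).re < 1 := by
  have hns : Complex.normSq (x*conj y) = 1 := by
    rw [Complex.normSq_mul, Complex.normSq_conj, nx, ny]; norm_num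
  have hsq : (x*conj y).re^2 + (x*conj y).im^2 = 1 := by
    rw [← hns, Complex.normSq_apply]; ring
  rcases lt_or_ge (x*conj y).re 1 with hlt | hge
  · exact hlt
  have hre : (x*conj y).re = 1 := le_antisymm (by nlinarith [sq_nonneg ((x*conj y).im)]) hge
  have him : (x*conj y).im = 0 := by nlinarith
  exfalso
  apply hxy
  have hone : x * conj y = 1 := by
    apply Complex.ext <;> simp [hre, him]
  have hy : conj y * y = 1 := by
    rw [mul_comm, Complex.mul_conj, ny]; norm_num
  calc x = x * (conj y * y) := by rw [hy, mul_one]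
    _ = (x * conj y) * y := by ring
    _ = y := by rw [hone, one_mul]

/-- Let `μ` be a zero-mean Borel probability measure on the unit circle supported on
exactly `n ∈ {2,3}` points, `h_μ(z) = ∫ (w+z)/(w-z) dμ(w)` its Herglotz transform and
`ψ_μ = (h_μ - 1)/(h_μ + 1)`. Then `ψ_μ` is a Blaschke product of degree `n` (a rational
inner function) with `ψ_μ(0) = 0` and `ψ_μ'(0) = 0`, and for `w` on the circle,
`ψ_μ(w) = 1` exactly when `w` lies in the support of `μ`. -/
theorem test_function_of_extreme_measure_is_blaschke
    (μ : Measure UnitCircle) [IsProbabilityMeasure μ]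
    (hmean : (∫ w : UnitCircle, (w : ℂ) ∂μ) = 0)
    (n : ℕ) (hn : n = 2 ∨ n = 3)
    (S : Finset UnitCircle) (hcard : S.card = n) (hsupp : μ (↑S)ᶜ = 0)
    (hpos : ∀ w ∈ S, μ {w} ≠ 0)
    (h ψ : ℂ → ℂ)
    (hh : ∀ z : ℂ, ‖z‖ < 1 →
      h z = ∫ w : UnitCircle, ((w : ℂ) + z) / ((w : ℂ) - z) ∂μ)
    (hψ : ∀ z : ℂ, ‖z‖ < 1 → ψ z = (h z - 1) / (h z + 1)) :
    ∃ (c : ℂ) (a : Fin n → ℂ), ‖c‖ = 1 ∧ (∀ i, ‖a i‖ < 1) ∧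
      (∀ z : ℂ, ‖z‖ < 1 →
        ψ z = c * ∏ i, ((z - a i) / (1 - conj (a i) * z))) ∧
      ψ 0 = 0 ∧ deriv ψ 0 = 0 ∧
      (∀ w : UnitCircle,
        c * (∏ i, (((w : ℂ) - a i) / (1 - conj (a i) * (w : ℂ)))) = 1 ↔ w ∈ S) := by

  rcases hn with rfl | rfl
  · -- n = 2
    obtain ⟨u, v, huv, rfl⟩ := Finset.card_eq_two.mp hcard
    set P := ((μ {u}).toReal : ℂ) with hP
    set Q := ((μ {v}).toReal : ℂ) with hQ
    have e1 : P + Q = 1 := by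
      have := hcoef μ {u,v} hsupp; rwa [Finset.sum_pair huv] at this
    have e2 : P * u + Q * v = 0 := by
      have := hmean_sum μ hmean {u,v} hsupp; rwa [Finset.sum_pair huv] at this
    have ppos : (0:ℝ) < (μ {u}).toReal :=
      ENNReal.toReal_pos (hpos u (by simp)) (measure_ne_top μ _)
    have qpos : (0:ℝ) < (μ {v}).toReal :=
      ENNReal.toReal_pos (hpos v (by simp)) (measure_ne_top μ _)
    have hPQ : P = Q := by
      have habseq : ‖P * u‖ = ‖Q * v‖ := by
        rw [show P * (u:ℂ) = -(Q * v) by linear_combination e2]; simp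
      simp only [norm_mul, habs u, habs v, mul_one, hP, hQ, Complex.norm_real, Real.norm_eq_abs,
        abs_of_pos ppos, abs_of_pos qpos] at habseq
      rw [hP, hQ, habseq]
    have hPh : P = 1/2 := by
      rw [hPQ] at e1 ⊢; linear_combination e1/2
    have hv : (v:ℂ) = -(u:ℂ) := by
      rw [← hPQ, hPh] at e2
      linear_combination 2*e2
    have hu1 : (u:ℂ) * conj (u:ℂ) = 1 := huc u
    have key : ∀ z : ℂ, ‖z‖ < 1 → ψ z = (conj (u:ℂ))^2 * z^2 := by
      intro z hz
      have hd1 : (u:ℂ) - z ≠ 0 := hsub_ne u hz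
      have hd2 : (u:ℂ) + z ≠ 0 := by
        have := hsub_ne v hz; rw [hv] at this; intro hc; apply this; linear_combination -hc
      have hzu : h z = ((u:ℂ)^2 + z^2)/((u:ℂ)^2 - z^2) := by
        rw [hh z hz, hherg μ {u,v} hsupp hz, Finset.sum_pair huv, ← hP, ← hQ, ← hPQ, hPh, hv]
        have h3 : (u:ℂ)^2 - z^2 ≠ 0 := by
          rw [show (u:ℂ)^2 - z^2 = ((u:ℂ)-z)*((u:ℂ)+z) by ring]
          exact mul_ne_zero hd1 hd2
        have hd2' : -(u:ℂ) - z ≠ 0 := by intro hc; apply hd2; linear_combination -hc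
        field_simp
        ring
      rw [hψ z hz, hzu]
      have h3 : (u:ℂ)^2 - z^2 ≠ 0 := by
        rw [show (u:ℂ)^2 - z^2 = ((u:ℂ)-z)*((u:ℂ)+z) by ring]
        exact mul_ne_zero hd1 hd2
      have hu0 : (u:ℂ) ≠ 0 := by
        intro hc; have := habs u; rw [hc] at this; simp at this
      have hnum : ((u:ℂ)^2 + z^2)/((u:ℂ)^2 - z^2) - 1 = 2*z^2/((u:ℂ)^2 - z^2) := by
        field_simp; ring
      have hden : ((u:ℂ)^2 + z^2)/((u:ℂ)^2 - z^2) + 1 = 2*(u:ℂ)^2/((u:ℂ)^2 - z^2) := by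
        field_simp; ring
      rw [hnum, hden]
      have hstep : 2*z^2/((u:ℂ)^2 - z^2) / (2*(u:ℂ)^2/((u:ℂ)^2-z^2)) = z^2 / (u:ℂ)^2 := by
        rw [div_div_div_comm, div_self h3, div_one]
        rw [show (2:ℂ)*z^2/(2*(u:ℂ)^2) = z^2/(u:ℂ)^2 by field_simp]
      rw [hstep, div_eq_iff (pow_ne_zero 2 hu0)]
      linear_combination (-1)*z^2*((u:ℂ)*conj (u:ℂ)+1)*hu1
    refine ⟨(conj (u:ℂ))^2, fun _ => 0, by simp [habs u], fun i => by simp, ?_, ?_, ?_, ?_⟩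
    · intro z hz
      rw [key z hz, Fin.prod_univ_two]
      simp only [map_zero, sub_zero, zero_mul, div_one]
      ring
    · have := key 0 (by simp)
      simpa using this
    · have hev : ψ =ᶠ[nhds 0] (fun z => (conj (u:ℂ))^2 * z^2) := by
        filter_upwards [Metric.ball_mem_nhds (0:ℂ) one_pos] with z hz
        exact key z (by simpa [Complex.dist_eq] using hz)
      rw [hev.deriv_eq]
      have : HasDerivAt (fun z : ℂ => (conj (u:ℂ))^2 * z^2) ((conj (u:ℂ))^2 * ((2:ℕ) * 0^1)) 0 :=
        (hasDerivAt_pow 2 (0:ℂ)).const_mul _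
      simpa using this.deriv
    · intro w
      rw [Fin.prod_univ_two]
      simp only [map_zero, sub_zero, zero_mul, sub_zero, div_one]
      constructor
      · intro hcq
        have hsq : (w:ℂ)^2 = (u:ℂ)^2 := by
          linear_combination (u:ℂ)^2 * hcq - (w:ℂ)^2 * ((u:ℂ) * conj (u:ℂ) + 1) * hu1
        have : ((w:ℂ) - u) * ((w:ℂ) + u) = 0 := by linear_combination hsq
        rcases mul_eq_zero.mp this with hc | hc
        · exact Finset.mem_insert.mpr (Or.inl (Subtype.coe_injective (by linear_combination hc)))
        · refine Finset.mem_insert.mpr (Or.inr (Finset.mem_singleton.mpr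
            (Subtype.coe_injective ?_)))
          show (w:ℂ) = v
          rw [hv]; linear_combination hc
      · intro hw
        rcases Finset.mem_insert.mp hw with h1 | h1
        · rw [h1]
          linear_combination ((u:ℂ) * conj (u:ℂ) + 1) * hu1
        · rw [Finset.mem_singleton.mp h1, hv]
          linear_combination ((u:ℂ) * conj (u:ℂ) + 1) * hu1
  · -- n = 3
    obtain ⟨u, v, t, huv, hut, hvt, rfl⟩ := Finset.card_eq_three.mp hcard
    have hsum3 : ∀ f : UnitCircle → ℂ,
        ∑ x ∈ ({u,v,t} : Finset UnitCircle), f x = f u + f v + f t := by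
      intro f
      rw [show ({u,v,t} : Finset UnitCircle) = insert u {v,t} from rfl,
        Finset.sum_insert (by simp [huv, hut]), Finset.sum_pair hvt, add_assoc]
    have e1 : ((μ {u}).toReal : ℂ) + ((μ {v}).toReal : ℂ) + ((μ {t}).toReal : ℂ) = 1 := by
      have := hcoef μ {u,v,t} hsupp; rwa [hsum3] at this
    have e2 : ((μ {u}).toReal : ℂ) * u + ((μ {v}).toReal : ℂ) * v
        + ((μ {t}).toReal : ℂ) * t = 0 := by
      have := hmean_sum μ hmean {u,v,t} hsupp; rwa [hsum3] at this
    have hzf : ∀ z : ℂ, ‖z‖ < 1 → h z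
        = ((μ {u}).toReal : ℂ) * (((u:ℂ)+z)/((u:ℂ)-z))
        + ((μ {v}).toReal : ℂ) * (((v:ℂ)+z)/((v:ℂ)-z))
        + ((μ {t}).toReal : ℂ) * (((t:ℂ)+z)/((t:ℂ)-z)) := by
      intro z hz
      rw [hh z hz, hherg μ {u,v,t} hsupp hz, hsum3]
    have hppos : (0:ℝ) < (μ {u}).toReal :=
      ENNReal.toReal_pos (hpos u (by simp)) (measure_ne_top μ _)
    have hqpos : (0:ℝ) < (μ {v}).toReal :=
      ENNReal.toReal_pos (hpos v (by simp)) (measure_ne_top μ _)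
    have hrpos : (0:ℝ) < (μ {t}).toReal :=
      ENNReal.toReal_pos (hpos t (by simp)) (measure_ne_top μ _)
    set p := (μ {u}).toReal with hpdef
    set q := (μ {v}).toReal with hqdef
    set r := (μ {t}).toReal with hrdef
    set a := (u:ℂ) with hadef
    set b := (v:ℂ) with hbdef
    set c := (t:ℂ) with hcdef
    have ua : a * conj a = 1 := huc u
    have ub : b * conj b = 1 := huc v
    have uc : c * conj c = 1 := huc t
    have hab : a ≠ b := fun hc => huv (Subtype.coe_injective hc)
    have hac : a ≠ c := fun hc => hut (Subtype.coe_injective hc)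
    have hbc : b ≠ c := fun hc => hvt (Subtype.coe_injective hc)
    have e3 : (p:ℂ) * conj a + (q:ℂ) * conj b + (r:ℂ) * conj c = 0 := by
      have := congrArg conj e2
      simpa [map_add, map_mul, Complex.conj_ofReal] using this
    -- real sum
    have e1r : p + q + r = 1 := by exact_mod_cast e1
    -- normSq of unit points
    have na : Complex.normSq a = 1 := by
      have := ua; rw [Complex.mul_conj] at this; exact_mod_cast this
    have nb : Complex.normSq b = 1 := by
      have := ub; rw [Complex.mul_conj] at this; exact_mod_cast this
    have nc : Complex.normSq c = 1 := by
      have := uc; rw [Complex.mul_conj] at this; exact_mod_cast this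
    have rel12 : p^2 + q^2 + 2*(p*q*((a*conj b).re)) = r^2 := mkrel a b c p q r na nb nc e2
    have rel13 : p^2 + r^2 + 2*(p*r*((a*conj c).re)) = q^2 := by
      apply mkrel a c b p r q na nc nb; linear_combination e2
    have rel23 : q^2 + r^2 + 2*(q*r*((b*conj c).re)) = p^2 := by
      apply mkrel b c a q r p nb nc na; linear_combination e2
    have Rab : (a*conj b).re < 1 := relt a b na nb hab
    have Rac : (a*conj c).re < 1 := relt a c na nc hac
    have Rbc : (b*conj c).re < 1 := relt b c nb nc hbc
    have hp2 : p < 1/2 := mass_lt_half p q r _ hppos hqpos hrpos e1r rel23 Rbc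
    have hq2 : q < 1/2 := mass_lt_half q p r _ hqpos hppos hrpos (by linarith) (by linarith [rel13]) Rac
    have hr2 : r < 1/2 := mass_lt_half r p q _ hrpos hppos hqpos (by linarith) (by linarith [rel12]) Rab
    have keyid : p*q*r*(1 - (3 + 2*((a*conj b).re + (a*conj c).re + (b*conj c).re)))
        = (1-2*p)*((1-2*q)*(1-2*r)) := by
      linear_combination (-r)*rel12 + (-q)*rel13 + (-p)*rel23
        + (-(p+q+r)^2 - (p+q+r) + 4*(p*q+p*r+q*r) + 1) * e1r
    have hcs1 : conj (a+b+c) = conj a + conj b + conj c := by rw [map_add, map_add]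
    have hads : ∀ x y : ℂ, x*conj y + conj x * y = 2*(((x*conj y).re : ℝ) : ℂ) := by
      intro x y
      have h1 := Complex.add_conj (x*conj y)
      rw [map_mul, Complex.conj_conj] at h1
      push_cast at h1
      linear_combination h1
    have nseqc : ((Complex.normSq (a+b+c) : ℝ) : ℂ)
        = 3 + 2*(((a*conj b).re : ℝ):ℂ) + 2*(((a*conj c).re:ℝ):ℂ) + 2*(((b*conj c).re:ℝ):ℂ) := by
      rw [← Complex.mul_conj, hcs1]
      linear_combination ua + ub + uc + hads a b + hads a c + hads b c
    have nseq : Complex.normSq (a+b+c)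
        = 3 + 2*(a*conj b).re + 2*(a*conj c).re + 2*(b*conj c).re := by
      exact_mod_cast nseqc
    have hnslt : Complex.normSq (a+b+c) < 1 := by
      rw [nseq]
      have hprod : (0:ℝ) < (1-2*p)*((1-2*q)*(1-2*r)) :=
        mul_pos (by linarith) (mul_pos (by linarith) (by linarith))
      have := aux_lt p q r (3 + 2*((a*conj b).re + (a*conj c).re + (b*conj c).re))
        hppos hqpos hrpos keyid hprod
      linarith
    have habs1 : ‖a+b+c‖ < 1 := abs_lt_one_of_normSq_lt hnslt
    have hσ2 : (a*b*c) * conj (a+b+c) = a*b + a*c + b*c := by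
      rw [hcs1]; linear_combination (b*c)*ua + (a*c)*ub + (a*b)*uc
    have hstar : (p:ℂ)*(b*c) + (q:ℂ)*(a*c) + (r:ℂ)*(a*b) = 0 := by
      linear_combination (a*b*c)*e3 + (-(p:ℂ)*b*c)*ua + (-(q:ℂ)*a*c)*ub + (-(r:ℂ)*a*b)*uc
    have hs2 : (p:ℂ)*a^2 + (q:ℂ)*b^2 + (r:ℂ)*c^2 = -(a*b + a*c + b*c) := by
      linear_combination (a+b+c)*e2 + hstar + (-(a*b+a*c+b*c))*e1
    have uabc : (a*b*c) * conj (a*b*c) = 1 := by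
      rw [map_mul, map_mul]
      linear_combination (b*conj b)*(c*conj c)*ua + (c*conj c)*ub + uc
    have una : a ≠ 0 := by
      intro hc; have := na; rw [hc] at this; simp at this
    have unb : b ≠ 0 := by
      intro hc; have := nb; rw [hc] at this; simp at this
    have unc : c ≠ 0 := by
      intro hc; have := nc; rw [hc] at this; simp at this
    have honez : ∀ z : ℂ, ‖z‖ < 1 → 1 - conj (a+b+c) * z ≠ 0 := by
      intro z hz hc
      have h1 : conj (a+b+c) * z = 1 := by linear_combination -hc
      have h2 := congrArg (‖·‖) h1
      rw [norm_mul, Complex.norm_conj, norm_one] at h2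
      exact mul_ne_one_of_lt _ _ (norm_nonneg _) habs1 hz h2
    have key : ∀ z : ℂ, ‖z‖ < 1 →
        ψ z = z^2 * (conj (a*b*c) * (z - (a+b+c)) / (1 - conj (a+b+c) * z)) := by
      intro z hz
      have d1 : a - z ≠ 0 := by rw [hadef]; exact hsub_ne u hz
      have d2 : b - z ≠ 0 := by rw [hbdef]; exact hsub_ne v hz
      have d3 : c - z ≠ 0 := by rw [hcdef]; exact hsub_ne t hz
      have hDne : (a-z)*((b-z)*(c-z)) ≠ 0 := mul_ne_zero d1 (mul_ne_zero d2 d3)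
      have hexp : h z = ((p:ℂ)*((a+z)*((b-z)*(c-z))) + (q:ℂ)*((b+z)*((a-z)*(c-z)))
          + (r:ℂ)*((c+z)*((a-z)*(b-z)))) / ((a-z)*((b-z)*(c-z))) := by
        rw [hzf z hz]
        field_simp
      have hNplus : (p:ℂ)*((a+z)*((b-z)*(c-z))) + (q:ℂ)*((b+z)*((a-z)*(c-z)))
          + (r:ℂ)*((c+z)*((a-z)*(b-z))) + (a-z)*((b-z)*(c-z))
          = 2*((a*b*c) - (a*b+a*c+b*c)*z) := by
        linear_combination ((a-z)*((b-z)*(c-z)) + 2*z*(z^2 - (a+b+c)*z + (a*b+a*c+b*c)))*e1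
          + (2*z^2 - 2*(a+b+c)*z)*e2 + 2*z*hs2
      have hNminus : (p:ℂ)*((a+z)*((b-z)*(c-z))) + (q:ℂ)*((b+z)*((a-z)*(c-z)))
          + (r:ℂ)*((c+z)*((a-z)*(b-z))) - (a-z)*((b-z)*(c-z))
          = 2*z^2*(z - (a+b+c)) := by
        linear_combination ((a-z)*((b-z)*(c-z)) + 2*z*(z^2 - (a+b+c)*z))*e1
          + 2*z^2*e2 + 2*z*hstar
      have hplus : h z + 1 = (2*((a*b*c) - (a*b+a*c+b*c)*z)) / ((a-z)*((b-z)*(c-z))) := by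
        rw [hexp, div_add_one hDne, hNplus]
      have hminus : h z - 1 = (2*z^2*(z - (a+b+c))) / ((a-z)*((b-z)*(c-z))) := by
        rw [hexp, div_sub_one hDne, hNminus]
      have hfact : (a*b*c) - (a*b+a*c+b*c)*z = (a*b*c)*(1 - conj (a+b+c)*z) := by
        linear_combination z*hσ2
      have hden2 : 2*((a*b*c) - (a*b+a*c+b*c)*z) ≠ 0 := by
        rw [hfact]
        exact mul_ne_zero two_ne_zero
          (mul_ne_zero (mul_ne_zero (mul_ne_zero una unb) unc) (honez z hz))
      rw [hψ z hz, hminus, hplus, div_div_div_comm, div_self hDne, div_one, hfact]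
      rw [div_eq_iff (by
        exact mul_ne_zero two_ne_zero
          (mul_ne_zero (mul_ne_zero (mul_ne_zero una unb) unc) (honez z hz)))]
      rw [show z^2 * (conj (a*b*c) * (z - (a+b+c)) / (1 - conj (a+b+c) * z))
            * (2*((a*b*c)*(1 - conj (a+b+c)*z)))
          = (2*z^2*(z-(a+b+c))*((a*b*c)*conj (a*b*c)))
            * ((1 - conj (a+b+c)*z) / (1 - conj (a+b+c)*z)) from by ring,
        div_self (honez z hz), mul_one, uabc, mul_one]
    refine ⟨conj (a*b*c), ![0, 0, a+b+c], ?_, ?_, ?_, ?_, ?_, ?_⟩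
    · rw [Complex.norm_conj]
      rw [norm_mul, norm_mul, hadef, hbdef, hcdef, habs u, habs v, habs t]
      norm_num
    · intro i
      fin_cases i
      · simp
      · simp
      · simpa using habs1
    · intro z hz
      rw [key z hz, Fin.prod_univ_three]
      simp only [Matrix.cons_val_zero, Matrix.cons_val_one, Matrix.head_cons,
        Matrix.cons_val_two, Matrix.tail_cons, map_zero, sub_zero, zero_mul, div_one]
      ring
    · have := key 0 (by simp)
      simpa using this
    · have hev : ψ =ᶠ[nhds 0]
          (fun z => z^2 * (conj (a*b*c) * (z - (a+b+c)) / (1 - conj (a+b+c) * z))) := by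
        filter_upwards [Metric.ball_mem_nhds (0:ℂ) one_pos] with z hz
        exact key z (by simpa [Complex.dist_eq] using hz)
      rw [hev.deriv_eq]
      have hk : DifferentiableAt ℂ
          (fun z => conj (a*b*c) * (z - (a+b+c)) / (1 - conj (a+b+c) * z)) 0 := by
        apply DifferentiableAt.div
        · fun_prop
        · fun_prop
        · simp
      have hd := (hasDerivAt_pow 2 (0:ℂ)).mul hk.hasDerivAt
      refine hd.deriv.trans ?_
      simp
    · intro w
      rw [Fin.prod_univ_three]
      simp only [Matrix.cons_val_zero, Matrix.cons_val_one, Matrix.head_cons,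
        Matrix.cons_val_two, Matrix.tail_cons, map_zero, sub_zero, zero_mul, div_one]
      have hWne : 1 - conj (a+b+c) * (w:ℂ) ≠ 0 := by
        intro hc
        have h1 : conj (a+b+c) * (w:ℂ) = 1 := by linear_combination -hc
        have h2 := congrArg (‖·‖) h1
        rw [norm_mul, Complex.norm_conj, habs w, norm_one, mul_one] at h2
        nlinarith [habs1]
      constructor
      · intro hcq
        have h2 : conj (a*b*c) * ((w:ℂ)*(w:ℂ)*((w:ℂ)-(a+b+c))) = 1 - conj (a+b+c) * (w:ℂ) := by
          have h0 : (conj (a*b*c) * ((w:ℂ)*(w:ℂ)*((w:ℂ)-(a+b+c)))) / (1 - conj (a+b+c)*(w:ℂ))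
              = 1 := by
            rw [show (conj (a*b*c) * ((w:ℂ)*(w:ℂ)*((w:ℂ)-(a+b+c)))) / (1 - conj (a+b+c)*(w:ℂ))
              = conj (a*b*c) * ((w:ℂ)*(w:ℂ)*(((w:ℂ)-(a+b+c)) / (1 - conj (a+b+c)*(w:ℂ))))
              from by ring]
            exact hcq
          exact (div_eq_one_iff_eq hWne).mp h0
        have hcube : ((w:ℂ) - a) * ((((w:ℂ) - b)) * (((w:ℂ) - c))) = 0 := by
          linear_combination (a*b*c)*h2
            + (-(w:ℂ)^3 + (a+b+c)*(w:ℂ)^2)*uabc + (-(w:ℂ))*hσ2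
        rcases mul_eq_zero.mp hcube with h0 | h0
        · refine Finset.mem_insert.mpr (Or.inl (Subtype.coe_injective ?_))
          rw [hadef] at h0
          show (w:ℂ) = (u:ℂ)
          linear_combination h0
        rcases mul_eq_zero.mp h0 with h0 | h0
        · refine Finset.mem_insert.mpr (Or.inr (Finset.mem_insert.mpr (Or.inl
            (Subtype.coe_injective ?_))))
          rw [hbdef] at h0
          show (w:ℂ) = (v:ℂ)
          linear_combination h0
        · refine Finset.mem_insert.mpr (Or.inr (Finset.mem_insert.mpr (Or.inr
            (Finset.mem_singleton.mpr (Subtype.coe_injective ?_)))))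
          rw [hcdef] at h0
          show (w:ℂ) = (t:ℂ)
          linear_combination h0
      · intro hw
        have hcube : ((w:ℂ) - a) * ((((w:ℂ) - b)) * (((w:ℂ) - c))) = 0 := by
          rcases Finset.mem_insert.mp hw with h1 | h1
          · have : (w:ℂ) = a := by rw [h1, hadef]
            rw [this]; ring
          rcases Finset.mem_insert.mp h1 with h1 | h1
          · have : (w:ℂ) = b := by rw [h1, hbdef]
            rw [this]; ring
          · have : (w:ℂ) = c := by rw [Finset.mem_singleton.mp h1, hcdef]
            rw [this]; ring
        have h2 : conj (a*b*c) * ((w:ℂ)*(w:ℂ)*((w:ℂ)-(a+b+c))) = 1 - conj (a+b+c) * (w:ℂ) := by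
          linear_combination conj (a*b*c)*hcube
            + (1 - (w:ℂ)*conj (a+b+c))*uabc + (w:ℂ)*conj (a*b*c)*hσ2
        rw [show conj (a*b*c) * ((w:ℂ) * (w:ℂ) * (((w:ℂ) - (a+b+c))/(1 - conj (a+b+c) * (w:ℂ))))
            = (conj (a*b*c) * ((w:ℂ)*(w:ℂ)*((w:ℂ)-(a+b+c)))) / (1 - conj (a+b+c)*(w:ℂ)) from by
            ring, h2, div_self hWne]
end
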